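/- Let X be a finite T0 topological space with n points that has path-shaped Hasse diagram, witnessed by a bijection e : {0, 1, …, n−1} → X such that for all i, j, (e(i) ⋖ e(j) or e(j) ⋖ e(i)) holds if and only if |i − j| = 1. Then for a nonempty subset Y ⊆ X the following are equivalent: (1) Y is connected and locally closed; (2) Y is an interval with respect to the enumeration e, i.e. there exist i ≤ j with Y = {e(k) | i ≤ k ≤ j}. -/

import Mathlib

/-- The specialisation order of a topological space: `x ⪯ y` iff `x ∈ closure {y}`. -/
def specLE {X : Type*} [TopologicalSpace X] (x y : X) : Prop := x ∈ closure ({y} : Set X)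

/-- Strict specialisation: `x ≺ y`. -/
def specLT {X : Type*} [TopologicalSpace X] (x y : X) : Prop := specLE x y ∧ x ≠ y

/-- The covering relation of the specialisation order: `x ⋖ y`. -/
def specCov {X : Type*} [TopologicalSpace X] (x y : X) : Prop :=
  specLT x y ∧ ¬ ∃ z, specLT x z ∧ specLT z y

section Aux

set_option linter.unusedSectionVars false

variable {X : Type*} [TopologicalSpace X]

lemma specLE_iff {x y : X} : specLE x y ↔ y ⤳ x := specializes_iff_mem_closure.symm

lemma specLE_refl (x : X) : specLE x x := subset_closure rfl

lemma specLE_trans {x y z : X} (h1 : specLE x y) (h2 : specLE y z) : specLE x z := by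
  rw [specLE_iff] at *
  exact h2.trans h1

lemma specLE_mem_open {U : Set X} {x y : X} (hU : IsOpen U) (hx : x ∈ U) (h : specLE x y) :
    y ∈ U := (specLE_iff.1 h).mem_open hU hx

lemma specLE_mem_closed {C : Set X} {x y : X} (hC : IsClosed C) (hy : y ∈ C) (h : specLE x y) :
    x ∈ C := (specLE_iff.1 h).mem_closed hC hy

lemma mem_exterior_iff_specLE {x y : X} : y ∈ nhdsKer ({x} : Set X) ↔ specLE x y := by
  rw [mem_nhdsKer_singleton, specLE_iff]

lemma pair_preconnected {x y : X} (h : specLE x y) : IsPreconnected ({x, y} : Set X) := by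
  have h1 : IsPreconnected ({y} : Set X) := isPreconnected_singleton
  refine h1.subset_closure (by simp) ?_
  rintro z (rfl | rfl)
  · exact h
  · exact subset_closure rfl

variable [T0Space X] [Finite X]

lemma specLE_antisymm {x y : X} (h1 : specLE x y) (h2 : specLE y x) : x = y := by
  rw [specLE_iff] at h1 h2
  exact (h2.antisymm h1).eq

lemma specLT_trans_le {x y z : X} (h1 : specLT x y) (h2 : specLE y z) : specLT x z :=
  ⟨specLE_trans h1.1 h2, fun h => h1.2 (specLE_antisymm h1.1 (h ▸ h2))⟩

/-- measure: number of elements strictly below. -/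
noncomputable def specM (x : X) : ℕ := Set.ncard {z : X | specLT z x}

lemma specM_lt {x y : X} (h : specLT x y) : specM x < specM y := by
  apply Set.ncard_lt_ncard _ (Set.toFinite _)
  rw [Set.ssubset_iff_of_subset]
  · exact ⟨x, h, fun hx => hx.2 rfl⟩
  · intro z hz
    exact specLT_trans_le hz h.1

lemma exists_cov_below {x y : X} (h : specLT x y) : ∃ z, specLE x z ∧ specCov z y := by
  have hne : ({z | specLE x z ∧ specLT z y} : Set X).Nonempty := ⟨x, specLE_refl x, h⟩
  obtain ⟨z, hzT, hmax⟩ :=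
    Set.Finite.exists_maximalFor specM _ (Set.toFinite {z | specLE x z ∧ specLT z y}) hne
  refine ⟨z, hzT.1, hzT.2, ?_⟩
  rintro ⟨w, hzw, hwy⟩
  have hwT : w ∈ {z | specLE x z ∧ specLT z y} := ⟨specLE_trans hzT.1 hzw.1, hwy⟩
  have hlt : specM z < specM w := specM_lt hzw
  exact absurd (hmax hwT hlt.le) (not_le.2 hlt)

variable {n : ℕ} (e : Fin n ≃ X)
  (he : ∀ i j : Fin n,
    (specCov (e i) (e j) ∨ specCov (e j) (e i)) ↔ (i.val + 1 = j.val ∨ j.val + 1 = i.val))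

include he in
/-- Key structural lemma: a strict specialisation relation between `e i` and `e j` forces the
order to be monotone along the whole index segment between `i` and `j`. -/
lemma mono_seg : ∀ N : ℕ, ∀ j i : Fin n, specM (e j) ≤ N → specLT (e i) (e j) →
    (i.val < j.val ∧
      ∀ k l : Fin n, i.val ≤ k.val → k.val ≤ l.val → l.val ≤ j.val → specLE (e k) (e l)) ∨
    (j.val < i.val ∧
      ∀ k l : Fin n, j.val ≤ k.val → k.val ≤ l.val → l.val ≤ i.val → specLE (e l) (e k)) := by
  intro N
  induction N using Nat.strong_induction_on with
  | _ N IH =>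
    intro j i hN hij
    have hinej : i ≠ j := fun h => hij.2 (by rw [h])
    have hinej' : i.val ≠ j.val := fun h => hinej (Fin.ext h)
    obtain ⟨z, hiz, hcov⟩ := exists_cov_below hij
    have hz : z = e (e.symm z) := (e.apply_symm_apply z).symm
    set j' := e.symm z with hj'
    rw [hz] at hiz hcov
    have hadj : j'.val + 1 = j.val ∨ j.val + 1 = j'.val := (he j' j).1 (Or.inl hcov)
    by_cases hii : i = j'
    · rw [← hii] at hadj
      rcases hadj with h1 | h1
      · left
        refine ⟨by omega, ?_⟩
        intro k l hik hkl hlj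
        by_cases hkli : k.val = l.val
        · have : k = l := Fin.ext hkli
          subst this; exact specLE_refl _
        · have hk : k = i := Fin.ext (by omega)
          have hl : l = j := Fin.ext (by omega)
          rw [hk, hl]; exact hij.1
      · right
        refine ⟨by omega, ?_⟩
        intro k l hjk hkl hli
        by_cases hkli : k.val = l.val
        · have : k = l := Fin.ext hkli
          subst this; exact specLE_refl _
        · have hk : k = j := Fin.ext (by omega)
          have hl : l = i := Fin.ext (by omega)
          rw [hk, hl]; exact hij.1
    · have hij' : specLT (e i) (e j') := ⟨hiz, fun h => hii (e.injective h)⟩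
      have hm : specM (e j') < specM (e j) := specM_lt hcov.1
      have hIH := IH (specM (e j')) (lt_of_lt_of_le hm hN) j' i le_rfl hij'
      have hj'j : specLE (e j') (e j) := hcov.1.1
      rcases hIH with ⟨hlt, F⟩ | ⟨hlt, F⟩ <;> rcases hadj with h1 | h1
      · -- i < j', j = j' + 1
        left
        refine ⟨by omega, ?_⟩
        intro k l hik hkl hlj
        by_cases hl : l.val ≤ j'.val
        · exact F k l hik hkl hl
        · have hlj2 : l = j := Fin.ext (by omega)
          rw [hlj2]
          by_cases hk : k.val ≤ j'.val
          · exact specLE_trans (F k j' hik hk le_rfl) hj'j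
          · have hkk : k = j := Fin.ext (by omega)
            rw [hkk]; exact specLE_refl _
      · -- i < j', j' = j + 1 : contradiction
        exfalso
        have hF := F j j' (by omega) (by omega) le_rfl
        have heq : e j = e j' := specLE_antisymm hF hj'j
        have := e.injective heq
        rw [Fin.ext_iff] at this
        omega
      · -- j' < i, j = j' + 1 : contradiction
        exfalso
        have hF := F j' j le_rfl (by omega) (by omega)
        have heq : e j = e j' := specLE_antisymm hF hj'j
        have := e.injective heq
        rw [Fin.ext_iff] at this
        omega
      · -- j' < i, j' = j + 1
        right
        refine ⟨by omega, ?_⟩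
        intro k l hjk hkl hli
        by_cases hk : j'.val ≤ k.val
        · exact F k l hk hkl hli
        · have hkj : k = j := Fin.ext (by omega)
          rw [hkj]
          by_cases hl : j'.val ≤ l.val
          · exact specLE_trans (F j' l le_rfl hl hli) hj'j
          · have hll : l = j := Fin.ext (by omega)
            rw [hll]; exact specLE_refl _

include he in
lemma spec_between {s t r : Fin n} (h : specLE (e s) (e t))
    (hr : (s.val < r.val ∧ r.val < t.val) ∨ (t.val < r.val ∧ r.val < s.val)) :
    specLE (e s) (e r) ∧ specLE (e r) (e t) := by
  have hst : s ≠ t := fun hst => by subst hst; omega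
  have hlt : specLT (e s) (e t) := ⟨h, fun h' => hst (e.injective h')⟩
  rcases mono_seg e he (specM (e t)) t s le_rfl hlt with ⟨h1, F⟩ | ⟨h1, F⟩ <;>
    rcases hr with ⟨h2, h3⟩ | ⟨h2, h3⟩
  · exact ⟨F s r le_rfl (by omega) (by omega), F r t (by omega) (by omega) le_rfl⟩
  · omega
  · omega
  · exact ⟨F r s (by omega) (by omega) le_rfl, F t r le_rfl (by omega) (by omega)⟩

include he in
lemma adj_comparable {c b : Fin n} (h : c.val + 1 = b.val) :
    specLE (e c) (e b) ∨ specLE (e b) (e c) := by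
  rcases (he c b).2 (Or.inl h) with h' | h'
  · exact Or.inl h'.1.1
  · exact Or.inr h'.1.1

include he in
lemma icc_preconnected : ∀ d : ℕ, ∀ a b : Fin n, a.val + d = b.val →
    IsPreconnected (e '' {k : Fin n | a ≤ k ∧ k ≤ b}) := by
  intro d
  induction d with
  | zero =>
    intro a b hab
    have hab' : a = b := Fin.ext (by omega)
    subst hab'
    have hset : {k : Fin n | a ≤ k ∧ k ≤ a} = {a} := by
      ext k
      simp only [Set.mem_setOf_eq, Set.mem_singleton_iff, Fin.le_def, Fin.ext_iff]
      omega
    rw [hset, Set.image_singleton]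
    exact isPreconnected_singleton
  | succ d IHd =>
    intro a b hab
    have hcn : a.val + d < n := by omega
    set c : Fin n := ⟨a.val + d, hcn⟩ with hc
    have hcv : c.val = a.val + d := rfl
    have hIH := IHd a c hcv.symm
    have hadj : c.val + 1 = b.val := by omega
    have hpair : IsPreconnected ({e c, e b} : Set X) := by
      rcases adj_comparable e he hadj with h' | h'
      · exact pair_preconnected h'
      · rw [Set.pair_comm]; exact pair_preconnected h'
    have hmem1 : e c ∈ e '' {k : Fin n | a ≤ k ∧ k ≤ c} :=
      ⟨c, ⟨show a.val ≤ c.val by omega, le_rfl⟩, rfl⟩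
    have hmem2 : e c ∈ ({e c, e b} : Set X) := Or.inl rfl
    have hu := IsPreconnected.union (e c) hmem1 hmem2 hIH hpair
    have hset : {k : Fin n | a ≤ k ∧ k ≤ b} = {k : Fin n | a ≤ k ∧ k ≤ c} ∪ {c, b} := by
      ext k
      simp only [Set.mem_setOf_eq, Set.mem_union, Set.mem_insert_iff, Set.mem_singleton_iff,
        Fin.le_def, Fin.ext_iff, hcv]
      omega
    rw [hset, Set.image_union, Set.image_pair]
    exact hu

end Aux

/-- In a finite T0-space with path-shaped Hasse diagram, witnessed by an enumeration
`e : Fin n ≃ X` in which the Hasse edges are exactly the consecutive pairs, a nonempty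
subset `Y` is connected and locally closed iff it is an interval `{e k | i ≤ k ≤ j}`
of the enumeration. -/
theorem stmt12 {X : Type*} [TopologicalSpace X] [Finite X] [T0Space X]
    (n : ℕ) (e : Fin n ≃ X)
    (he : ∀ i j : Fin n,
      (specCov (e i) (e j) ∨ specCov (e j) (e i)) ↔ (i.val + 1 = j.val ∨ j.val + 1 = i.val))
    (Y : Set X) (hY : Y.Nonempty) :
    (IsConnected Y ∧ IsLocallyClosed Y) ↔
      ∃ i j : Fin n, i ≤ j ∧ Y = ⇑e '' {k : Fin n | i ≤ k ∧ k ≤ j} := by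
  constructor
  · rintro ⟨hconn, U, Z, hU, hZ, hUZ⟩
    set S : Set (Fin n) := e ⁻¹' Y with hS
    have hSfin : S.Finite := Set.toFinite S
    have hSne : S.Nonempty := by
      obtain ⟨y, hy⟩ := hY
      exact ⟨e.symm y, by simp [hS, hy]⟩
    have hbetween : ∀ p q r : Fin n, p ∈ S → q ∈ S → p.val < r.val → r.val < q.val → r ∈ S := by
      intro p q r hp hq hpr hrq
      by_contra hrS
      have hrY : e r ∉ Y := hrS
      set u : Set X := ⋃ x ∈ {x ∈ Y | (e.symm x).val < r.val}, nhdsKer {x} with hu'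
      set v : Set X := ⋃ x ∈ {x ∈ Y | r.val < (e.symm x).val}, nhdsKer {x} with hv'
      have hu : IsOpen u := isOpen_biUnion fun _ _ => isOpen_nhdsKer
      have hv : IsOpen v := isOpen_biUnion fun _ _ => isOpen_nhdsKer
      have hcover : Y ⊆ u ∪ v := by
        intro y hy
        have hyr : (e.symm y).val ≠ r.val := by
          intro hcontra
          have hyer : y = e r :=
            (e.apply_symm_apply y).symm.trans (congrArg e (Fin.ext hcontra))
          exact hrY (hyer ▸ hy)
        rcases lt_or_gt_of_ne hyr with h | h
        · exact Or.inl (Set.mem_biUnion (Set.mem_sep_iff.2 ⟨hy, h⟩) (subset_nhdsKer rfl))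
        · exact Or.inr (Set.mem_biUnion (Set.mem_sep_iff.2 ⟨hy, h⟩) (subset_nhdsKer rfl))
      have hpu : (Y ∩ u).Nonempty := by
        refine ⟨e p, hp, Set.mem_biUnion (Set.mem_sep_iff.2 ⟨hp, ?_⟩) (subset_nhdsKer rfl)⟩
        simpa using hpr
      have hqv : (Y ∩ v).Nonempty := by
        refine ⟨e q, hq, Set.mem_biUnion (Set.mem_sep_iff.2 ⟨hq, ?_⟩) (subset_nhdsKer rfl)⟩
        simpa using hrq
      obtain ⟨y, hyY, hyu, hyv⟩ := hconn.2 u v hu hv hcover hpu hqv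
      rw [hu', Set.mem_iUnion₂] at hyu
      rw [hv', Set.mem_iUnion₂] at hyv
      obtain ⟨x, hx, hyx⟩ := hyu
      obtain ⟨x', hx2, hyx'⟩ := hyv
      obtain ⟨hxY, hxr⟩ := Set.mem_sep_iff.1 hx
      obtain ⟨hx'Y, hx'r⟩ := Set.mem_sep_iff.1 hx2
      have h1 : specLE x y := mem_exterior_iff_specLE.1 hyx
      have h2 : specLE x' y := mem_exterior_iff_specLE.1 hyx'
      have hyr : (e.symm y).val ≠ r.val := by
        intro hcontra
        have hyer : y = e r :=
          (e.apply_symm_apply y).symm.trans (congrArg e (Fin.ext hcontra))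
        exact hrY (hyer ▸ hyY)
      have hyUZ : y ∈ U ∩ Z := by rw [← hUZ]; exact hyY
      have her : e r ∈ Y := by
        rcases lt_or_gt_of_ne hyr with h | h
        · have hx'UZ : x' ∈ U ∩ Z := by rw [← hUZ]; exact hx'Y
          have hb := spec_between e he (s := e.symm x') (t := e.symm y) (r := r)
            (by simpa only [e.apply_symm_apply] using h2) (Or.inr ⟨h, hx'r⟩)
          rw [e.apply_symm_apply, e.apply_symm_apply] at hb
          rw [hUZ]
          exact ⟨specLE_mem_open hU hx'UZ.1 hb.1, specLE_mem_closed hZ hyUZ.2 hb.2⟩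
        · have hxUZ : x ∈ U ∩ Z := by rw [← hUZ]; exact hxY
          have hb := spec_between e he (s := e.symm x) (t := e.symm y) (r := r)
            (by simpa only [e.apply_symm_apply] using h1) (Or.inl ⟨hxr, h⟩)
          rw [e.apply_symm_apply, e.apply_symm_apply] at hb
          rw [hUZ]
          exact ⟨specLE_mem_open hU hxUZ.1 hb.1, specLE_mem_closed hZ hyUZ.2 hb.2⟩
      exact hrY her
    have hFne : hSfin.toFinset.Nonempty := by
      rwa [Set.Finite.toFinset_nonempty]
    refine ⟨hSfin.toFinset.min' hFne, hSfin.toFinset.max' hFne,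
      Finset.min'_le _ _ (Finset.max'_mem _ hFne), ?_⟩
    have hminS : hSfin.toFinset.min' hFne ∈ S :=
      hSfin.mem_toFinset.1 (Finset.min'_mem _ hFne)
    have hmaxS : hSfin.toFinset.max' hFne ∈ S :=
      hSfin.mem_toFinset.1 (Finset.max'_mem _ hFne)
    have hSeq : S = {k : Fin n | hSfin.toFinset.min' hFne ≤ k ∧ k ≤ hSfin.toFinset.max' hFne} := by
      ext k
      constructor
      · intro hk
        have hk' : k ∈ hSfin.toFinset := hSfin.mem_toFinset.2 hk
        exact ⟨Finset.min'_le _ k hk', Finset.le_max' _ k hk'⟩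
      · rintro ⟨h1, h2⟩
        by_cases hk1 : k = hSfin.toFinset.min' hFne
        · exact hk1 ▸ hminS
        · by_cases hk2 : k = hSfin.toFinset.max' hFne
          · exact hk2 ▸ hmaxS
          · refine hbetween _ _ k hminS hmaxS ?_ ?_
            · exact lt_of_le_of_ne h1 (fun h => hk1 (Fin.ext h).symm)
            · exact lt_of_le_of_ne h2 (fun h => hk2 (Fin.ext h))
    have himg : e '' S = Y := by rw [hS, Equiv.image_preimage]
    rw [← himg]
    exact congrArg (fun s => e '' s) hSeq
  · rintro ⟨i, j, hij, rfl⟩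
    have hij' : i.val ≤ j.val := hij
    refine ⟨⟨⟨e i, ⟨i, ⟨le_rfl, hij⟩, rfl⟩⟩, ?_⟩, ?_⟩
    · exact icc_preconnected e he (j.val - i.val) i j (by omega)
    · refine ⟨⋃ k ∈ {k : Fin n | i ≤ k ∧ k ≤ j}, nhdsKer {e k},
        ⋃ k ∈ {k : Fin n | i ≤ k ∧ k ≤ j}, closure {e k},
        isOpen_biUnion (fun _ _ => isOpen_nhdsKer),
        Set.Finite.isClosed_biUnion (Set.toFinite _) (fun _ _ => isClosed_closure), ?_⟩
      ext x
      simp only [Set.mem_image, Set.mem_inter_iff, Set.mem_iUnion, exists_prop,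
        Set.mem_setOf_eq]
      constructor
      · rintro ⟨k, hk, rfl⟩
        exact ⟨⟨k, hk, subset_nhdsKer rfl⟩, ⟨k, hk, subset_closure rfl⟩⟩
      · rintro ⟨⟨a, ha, hxa⟩, ⟨b, hb, hxb⟩⟩
        set p := e.symm x with hp
        have hxp : x = e p := (e.apply_symm_apply x).symm
        have h1 : specLE (e a) (e p) := by rw [← hxp]; exact mem_exterior_iff_specLE.1 hxa
        have h2 : specLE (e p) (e b) := by rw [← hxp]; exact hxb
        have hc1 : ¬ (a.val < p.val ∧ b.val < p.val) := by
          rintro ⟨ha', hb'⟩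
          have hap : a ≠ p := fun h => by subst h; omega
          have hpb : p ≠ b := fun h => by subst h; omega
          have hL1 := mono_seg e he (specM (e p)) p a le_rfl
            ⟨h1, fun h => hap (e.injective h)⟩
          have hL2 := mono_seg e he (specM (e b)) b p le_rfl
            ⟨h2, fun h => hpb (e.injective h)⟩
          rcases hL1 with ⟨_, F1⟩ | ⟨h', _⟩
          · rcases hL2 with ⟨h'', _⟩ | ⟨_, F2⟩
            · omega
            · have hqn : p.val - 1 < n := by omega
              have hq1 : specLE (e ⟨p.val - 1, hqn⟩) (e p) :=
                F1 ⟨p.val - 1, hqn⟩ p (show a.val ≤ p.val - 1 by omega)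
                  (show p.val - 1 ≤ p.val by omega) le_rfl
              have hq2 : specLE (e p) (e ⟨p.val - 1, hqn⟩) :=
                F2 ⟨p.val - 1, hqn⟩ p (show b.val ≤ p.val - 1 by omega)
                  (show p.val - 1 ≤ p.val by omega) le_rfl
              have heq : (⟨p.val - 1, hqn⟩ : Fin n) = p := e.injective (specLE_antisymm hq1 hq2)
              have hv : p.val - 1 = p.val := congrArg Fin.val heq
              omega
          · omega
        have hc2 : ¬ (p.val < a.val ∧ p.val < b.val) := by
          rintro ⟨ha', hb'⟩
          have hap : a ≠ p := fun h => by subst h; omega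
          have hpb : p ≠ b := fun h => by subst h; omega
          have hL1 := mono_seg e he (specM (e p)) p a le_rfl
            ⟨h1, fun h => hap (e.injective h)⟩
          have hL2 := mono_seg e he (specM (e b)) b p le_rfl
            ⟨h2, fun h => hpb (e.injective h)⟩
          rcases hL1 with ⟨h', _⟩ | ⟨_, F1⟩
          · omega
          · rcases hL2 with ⟨_, F2⟩ | ⟨h'', _⟩
            · have hqn : p.val + 1 < n := by
                have := a.isLt
                omega
              have hq1 : specLE (e ⟨p.val + 1, hqn⟩) (e p) :=
                F1 p ⟨p.val + 1, hqn⟩ le_rfl (show p.val ≤ p.val + 1 by omega)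
                  (show p.val + 1 ≤ a.val by omega)
              have hq2 : specLE (e p) (e ⟨p.val + 1, hqn⟩) :=
                F2 p ⟨p.val + 1, hqn⟩ le_rfl (show p.val ≤ p.val + 1 by omega)
                  (show p.val + 1 ≤ b.val by omega)
              have heq : (⟨p.val + 1, hqn⟩ : Fin n) = p := e.injective (specLE_antisymm hq1 hq2)
              have hv : p.val + 1 = p.val := congrArg Fin.val heq
              omega
            · omega
        have hia : i.val ≤ a.val ∧ a.val ≤ j.val := ⟨ha.1, ha.2⟩
        have hib : i.val ≤ b.val ∧ b.val ≤ j.val := ⟨hb.1, hb.2⟩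
        exact ⟨p, ⟨show i.val ≤ p.val by omega, show p.val ≤ j.val by omega⟩,
          (e.apply_symm_apply x)⟩
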